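/- Fix α with 2/3 < α ≤ 3/4, a constant ε with 0 < ε, a constant γ ∈ (0, 1/(4√2)], and channel coefficients h₁₁, h₁₂, h₂₁, h₂₂ ∈ (1, 2]. For P > 1 let Q_c = P^{(3α−2−ε)/2} and Q_p = P^{(1−α−ε)/2}, and let v₁c, v₂c, u₁, u₂ be independent random variables each uniformly distributed on Ω(2γ/Q_c, Q_c), let v₁p, v₂p be independent random variables uniformly distributed on Ω(γ/Q_p, Q_p), all six mutually independent and independent of z₁ distributed as the Gaussian measure N(0, 1). Define y₁ = √P·h₁₁h₂₂·v₁c + √(P^{1−α})·h₁₁h₂₂·v₁p + √(P^{α})·h₁₂h₁₁·(v₂c + u₁) + √(P^{2α−1})·h₁₂h₂₁·u₂ + h₁₂h₁₁·v₂p + z₁. Then for every η > 0 there exists P₀ such that for all P ≥ P₀ there is a Borel-measurable function f : ℝ → ℝ × ℝ with ℙ[ f(y₁) = (v₁c, v₁p) ] > 1 − η. (Successive decoding recovers v₁c and v₁p from y₁ with error probability tending to 0 as P → ∞.) -/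

import Mathlib

open MeasureTheory ProbabilityTheory Real

/-- The PAM constellation `Ω(ξ, Q) = { ξ·a : a ∈ ℤ, −Q ≤ a ≤ Q }`. -/
def PAM (ξ Q : ℝ) : Set ℝ :=
  {x | ∃ a : ℤ, x = ξ * a ∧ -Q ≤ (a : ℝ) ∧ (a : ℝ) ≤ Q}

lemma measurable_roundcast (w : ℝ) : Measurable fun y : ℝ => ((round (y / w) : ℤ) : ℝ) := by
  have h : Measurable fun y : ℝ => round (y / w) := by
    simp only [round_eq]
    exact Measurable.floor ((measurable_id.div_const w).add_const _)
  exact (measurable_from_top (f := (Int.cast : ℤ → ℝ))).comp h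

noncomputable def sdStep (w y : ℝ) : ℝ := y - w * (round (y / w) : ℤ)

lemma round_recover (w : ℝ) (a : ℤ) (r : ℝ) (hw : 0 < w) (hr : |r| < w / 2) :
    round ((w * a + r) / w) = a := by
  have hw' : w ≠ 0 := hw.ne'
  have h1 : (w * a + r) / w = r / w + a := by field_simp; ring
  rw [h1, round_add_intCast]
  have h2 : round (r / w) = 0 := by
    rw [round_eq_zero_iff]
    constructor
    · rw [le_div_iff₀ hw]; nlinarith [abs_lt.1 hr]
    · rw [div_lt_iff₀ hw]; nlinarith [abs_lt.1 hr]
  rw [h2, zero_add]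

lemma sdStep_recover (w : ℝ) (a : ℤ) (r : ℝ) (hw : 0 < w) (hr : |r| < w / 2) :
    sdStep w (w * a + r) = r := by
  rw [sdStep, round_recover w a r hw hr]; ring

lemma measurable_sdStep (w : ℝ) : Measurable (sdStep w) := by
  unfold sdStep
  exact measurable_id.sub ((measurable_roundcast w).const_mul w)

lemma decode4 (w₁ w₂ w₃ w₄ e : ℝ) (a s t b : ℤ)
    (hw₁ : 0 < w₁) (hw₂ : 0 < w₂) (hw₃ : 0 < w₃) (hw₄ : 0 < w₄)
    (h₁ : |w₂ * s + w₃ * t + w₄ * b + e| < w₁ / 2)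
    (h₂ : |w₃ * t + w₄ * b + e| < w₂ / 2)
    (h₃ : |w₄ * b + e| < w₃ / 2)
    (h₄ : |e| < w₄ / 2) :
    round ((w₁ * a + w₂ * s + w₃ * t + w₄ * b + e) / w₁) = a ∧
    round (sdStep w₃ (sdStep w₂ (sdStep w₁ (w₁ * a + w₂ * s + w₃ * t + w₄ * b + e))) / w₄) = b := by
  have e1 : w₁ * a + w₂ * s + w₃ * t + w₄ * b + e
      = w₁ * a + (w₂ * s + w₃ * t + w₄ * b + e) := by ring
  have e2 : w₂ * s + w₃ * t + w₄ * b + e = w₂ * s + (w₃ * t + w₄ * b + e) := by ring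
  have e3 : w₃ * t + w₄ * b + e = w₃ * t + (w₄ * b + e) := by ring
  constructor
  · rw [e1]; exact round_recover _ _ _ hw₁ h₁
  · rw [e1, sdStep_recover _ _ _ hw₁ h₁, e2, sdStep_recover _ _ _ hw₂ h₂,
      e3, sdStep_recover _ _ _ hw₃ h₃]
    exact round_recover _ _ _ hw₄ h₄

lemma stage_bound (P γ T ε x y : ℝ) (hP : 1 ≤ P) (hγ : 0 < γ) (hT : 0 ≤ T)
    (hx : 0 ≤ x) (hxy : x + ε / 2 ≤ y)
    (hkey : 32 * γ + T < γ / 2 * P ^ (ε / 2)) :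
    32 * γ * P ^ x + T < γ * P ^ y := by
  have hP0 : (0:ℝ) < P := lt_of_lt_of_le one_pos hP
  have h1 : (1:ℝ) ≤ P ^ x := Real.one_le_rpow hP hx
  have h2 : P ^ (x + ε / 2) ≤ P ^ y := Real.rpow_le_rpow_of_exponent_le hP hxy
  have h3 : P ^ (x + ε / 2) = P ^ x * P ^ (ε / 2) := Real.rpow_add hP0 _ _
  have h4 : (0:ℝ) < P ^ (ε/2) := Real.rpow_pos_of_pos hP0 _
  nlinarith [mul_le_mul_of_nonneg_left h2 hγ.le]

lemma PAM_mem_iff {ξ Q x : ℝ} : x ∈ PAM ξ Q ↔ ∃ a : ℤ, x = ξ * a ∧ |(a:ℝ)| ≤ Q := by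
  simp only [PAM, Set.mem_setOf_eq, abs_le]

lemma PAM_finite (ξ Q : ℝ) : (PAM ξ Q).Finite := by
  have : PAM ξ Q ⊆ (fun a : ℤ => ξ * a) '' (Set.Icc ⌈-Q⌉ ⌊Q⌋) := by
    rintro x ⟨a, rfl, h1, h2⟩
    exact ⟨a, ⟨Int.ceil_le.2 h1, Int.le_floor.2 h2⟩, rfl⟩
  exact ((Set.finite_Icc _ _).image _).subset this

lemma PAM_nonempty {ξ Q : ℝ} (hQ : 0 ≤ Q) : (PAM ξ Q).Nonempty := by
  refine ⟨0, 0, by simp, ?_, ?_⟩ <;> simpa using hQ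

lemma gaussian_tail {δ : ENNReal} (hδ : 0 < δ) :
    ∃ T : ℝ, 0 ≤ T ∧ (gaussianReal 0 1) {x : ℝ | T < |x|} < δ := by
  have hmeas : ∀ n : ℕ, NullMeasurableSet {x : ℝ | (n:ℝ) < |x|} (gaussianReal 0 1) := fun n =>
    ((isOpen_lt continuous_const continuous_abs).measurableSet).nullMeasurableSet
  have hanti : Antitone fun n : ℕ => {x : ℝ | (n:ℝ) < |x|} := by
    intro n m hnm x hx
    have hx' : (m:ℝ) < |x| := hx
    exact lt_of_le_of_lt (by exact_mod_cast hnm) hx' 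
  have hint : ⋂ n : ℕ, {x : ℝ | (n:ℝ) < |x|} = (∅ : Set ℝ) := by
    ext x
    simp only [Set.mem_iInter, Set.mem_setOf_eq, Set.mem_empty_iff_false, iff_false, not_forall,
      not_lt]
    exact exists_nat_ge |x|
  have htend := tendsto_measure_iInter_atTop hmeas hanti ⟨0, measure_ne_top _ _⟩
  rw [hint, measure_empty] at htend
  have hev := htend.eventually_lt_const hδ
  obtain ⟨n, hn⟩ := hev.exists
  exact ⟨n, n.cast_nonneg, hn⟩
set_option maxHeartbeats 1000000 in
theorem successive_decoding_regime_two_thirds_three_fourths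
    (α ε γ h₁₁ h₁₂ h₂₁ h₂₂ : ℝ)
    (hα₁ : 2 / 3 < α) (hα₂ : α ≤ 3 / 4) (hε : 0 < ε)
    (hγ₁ : 0 < γ) (hγ₂ : γ ≤ 1 / (4 * Real.sqrt 2))
    (hh₁₁ : h₁₁ ∈ Set.Ioc (1 : ℝ) 2) (hh₁₂ : h₁₂ ∈ Set.Ioc (1 : ℝ) 2)
    (hh₂₁ : h₂₁ ∈ Set.Ioc (1 : ℝ) 2) (hh₂₂ : h₂₂ ∈ Set.Ioc (1 : ℝ) 2) :
    ∀ η > (0 : ℝ), ∃ P₀ > (1 : ℝ), ∀ P ≥ P₀,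
      ∀ (Ω : Type) (_ : MeasurableSpace Ω) (μ : Measure Ω) (_ : IsProbabilityMeasure μ)
        (v₁c v₂c u₁ u₂ v₁p v₂p z₁ : Ω → ℝ),
        Measurable v₁c → Measurable v₂c → Measurable u₁ → Measurable u₂ →
        Measurable v₁p → Measurable v₂p → Measurable z₁ →
        Measure.map v₁c μ
          = uniformOn (PAM (2 * γ / P ^ ((3 * α - 2 - ε) / 2)) (P ^ ((3 * α - 2 - ε) / 2))) →
        Measure.map v₂c μ
          = uniformOn (PAM (2 * γ / P ^ ((3 * α - 2 - ε) / 2)) (P ^ ((3 * α - 2 - ε) / 2))) →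
        Measure.map u₁ μ
          = uniformOn (PAM (2 * γ / P ^ ((3 * α - 2 - ε) / 2)) (P ^ ((3 * α - 2 - ε) / 2))) →
        Measure.map u₂ μ
          = uniformOn (PAM (2 * γ / P ^ ((3 * α - 2 - ε) / 2)) (P ^ ((3 * α - 2 - ε) / 2))) →
        Measure.map v₁p μ
          = uniformOn (PAM (γ / P ^ ((1 - α - ε) / 2)) (P ^ ((1 - α - ε) / 2))) →
        Measure.map v₂p μ
          = uniformOn (PAM (γ / P ^ ((1 - α - ε) / 2)) (P ^ ((1 - α - ε) / 2))) →
        Measure.map z₁ μ = gaussianReal 0 1 →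
        iIndepFun
          ![v₁c, v₂c, u₁, u₂, v₁p, v₂p, z₁] μ →
        ∃ f : ℝ → ℝ × ℝ, Measurable f ∧
          μ {ω | f (Real.sqrt P * (h₁₁ * h₂₂) * v₁c ω
                    + Real.sqrt (P ^ (1 - α)) * (h₁₁ * h₂₂) * v₁p ω
                    + Real.sqrt (P ^ α) * (h₁₂ * h₁₁) * (v₂c ω + u₁ ω)
                    + Real.sqrt (P ^ (2 * α - 1)) * (h₁₂ * h₂₁) * u₂ ω
                    + (h₁₂ * h₁₁) * v₂p ω + z₁ ω)
                  = (v₁c ω, v₁p ω)}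
            > ENNReal.ofReal (1 - η) := by
  obtain ⟨g12a, g12b⟩ := hh₁₂
  obtain ⟨g11a, g11b⟩ := hh₁₁
  obtain ⟨g21a, g21b⟩ := hh₂₁
  obtain ⟨g22a, g22b⟩ := hh₂₂
  have hA0 : (0:ℝ) < h₁₁ * h₂₂ := by nlinarith
  have hA1 : (1:ℝ) ≤ h₁₁ * h₂₂ := by nlinarith
  have hA4 : h₁₁ * h₂₂ ≤ 4 := by nlinarith
  have hB0 : (0:ℝ) < h₁₂ * h₁₁ := by nlinarith
  have hB1 : (1:ℝ) ≤ h₁₂ * h₁₁ := by nlinarith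
  have hB4 : h₁₂ * h₁₁ ≤ 4 := by nlinarith
  have hC0 : (0:ℝ) < h₁₂ * h₂₁ := by nlinarith
  have hC1 : (1:ℝ) ≤ h₁₂ * h₂₁ := by nlinarith
  have hC4 : h₁₂ * h₂₁ ≤ 4 := by nlinarith
  intro η hη
  have hδpos : (0 : ENNReal) < ENNReal.ofReal (min η 1 / 2) := by
    rw [ENNReal.ofReal_pos]
    have : 0 < min η 1 := lt_min hη one_pos
    linarith
  obtain ⟨T, hT0, hTtail⟩ := gaussian_tail hδpos
  set base : ℝ := (64 * γ + 2 * T) / γ + 2 with hbase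
  have hbase1 : (1:ℝ) ≤ base := by
    have : 0 ≤ (64 * γ + 2 * T) / γ := by positivity
    simp only [hbase]; linarith
  refine ⟨max 2 (base ^ (2 / ε)), lt_of_lt_of_le one_lt_two (le_max_left _ _), ?_⟩
  intro P hP Ω mΩ μ hprob v₁c v₂c u₁ u₂ v₁p v₂p z₁ m1 m2 m3 m4 m5 m6 m7 d1 d2 d3 d4 d5 d6 d7 _hind
  haveI := hprob
  have hP2 : (2:ℝ) ≤ P := le_trans (le_max_left _ _) hP
  have hP1 : (1:ℝ) < P := by linarith
  have hPe : (1:ℝ) ≤ P := hP1.le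
  have hP0 : (0:ℝ) < P := by linarith
  -- key inequality
  have hkey : 32 * γ + T < γ / 2 * P ^ (ε / 2) := by
    have h1 : base ^ (2 / ε) ≤ P := le_trans (le_max_right _ _) hP
    have h2 : (base ^ (2 / ε)) ^ (ε / 2) ≤ P ^ (ε / 2) :=
      Real.rpow_le_rpow (Real.rpow_nonneg (by linarith) _) h1 (by positivity)
    have h3 : (base ^ (2 / ε)) ^ (ε / 2) = base := by
      rw [← Real.rpow_mul (by linarith : (0:ℝ) ≤ base),
        show 2 / ε * (ε / 2) = 1 by field_simp, Real.rpow_one]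
    rw [h3] at h2
    have h4 : γ / 2 * base ≤ γ / 2 * P ^ (ε / 2) := by nlinarith
    have hb : γ / 2 * base = 32 * γ + T + γ := by
      rw [hbase]
      field_simp
      ring
    linarith
  set Qc : ℝ := P ^ ((3 * α - 2 - ε) / 2) with hQc
  set Qp : ℝ := P ^ ((1 - α - ε) / 2) with hQp
  have hQc0 : 0 < Qc := Real.rpow_pos_of_pos hP0 _
  have hQp0 : 0 < Qp := Real.rpow_pos_of_pos hP0 _
  set ξc : ℝ := 2 * γ / Qc with hξc
  set ξp : ℝ := γ / Qp with hξp
  have hξc0 : 0 < ξc := by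
    rw [hξc]; exact div_pos (by linarith) hQc0
  have hξp0 : 0 < ξp := by
    rw [hξp]; exact div_pos hγ₁ hQp0
  have hξcQc : ξc * Qc = 2 * γ := by
    rw [hξc]; field_simp
  have hξpQp : ξp * Qp = γ := by
    rw [hξp]; field_simp
  set w₁ : ℝ := Real.sqrt P * (h₁₁ * h₂₂) * ξc with hw₁
  set w₂ : ℝ := Real.sqrt (P ^ α) * (h₁₂ * h₁₁) * ξc with hw₂
  set w₃ : ℝ := Real.sqrt (P ^ (2 * α - 1)) * (h₁₂ * h₂₁) * ξc with hw₃
  set w₄ : ℝ := Real.sqrt (P ^ (1 - α)) * (h₁₁ * h₂₂) * ξp with hw₄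
  have hsq : ∀ x : ℝ, Real.sqrt (P ^ x) = P ^ (x / 2) := by
    intro x
    rw [Real.sqrt_eq_rpow, ← Real.rpow_mul hP0.le]
    ring_nf
  have hsqP : Real.sqrt P = P ^ ((1:ℝ) / 2) := Real.sqrt_eq_rpow P
  have hpos : ∀ x : ℝ, (0:ℝ) < P ^ x := fun x => Real.rpow_pos_of_pos hP0 x
  have hmono : ∀ x y : ℝ, x ≤ y → P ^ x ≤ P ^ y := fun x y h =>
    Real.rpow_le_rpow_of_exponent_le hPe h
  have hone : ∀ x : ℝ, 0 ≤ x → (1:ℝ) ≤ P ^ x := fun x hx => Real.one_le_rpow hPe hx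
  have hw₁0 : 0 < w₁ := by
    rw [hw₁]; exact mul_pos (mul_pos (Real.sqrt_pos.2 hP0) hA0) hξc0
  have hw₂0 : 0 < w₂ := by
    rw [hw₂]; exact mul_pos (mul_pos (Real.sqrt_pos.2 (hpos α)) hB0) hξc0
  have hw₃0 : 0 < w₃ := by
    rw [hw₃]; exact mul_pos (mul_pos (Real.sqrt_pos.2 (hpos (2 * α - 1))) hC0) hξc0
  have hw₄0 : 0 < w₄ := by
    rw [hw₄]; exact mul_pos (mul_pos (Real.sqrt_pos.2 (hpos (1 - α))) hA0) hξp0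
  -- half-spacing identities
  have hw₁eq : w₁ = 2 * γ * (h₁₁ * h₂₂) * P ^ ((3 - 3 * α + ε) / 2) := by
    rw [hw₁, hξc, hQc, hsqP,
      show (3 - 3 * α + ε) / 2 = 1 / 2 - (3 * α - 2 - ε) / 2 by ring, Real.rpow_sub hP0]
    ring
  have hw₂eq : w₂ = 2 * γ * (h₁₂ * h₁₁) * P ^ ((2 - 2 * α + ε) / 2) := by
    rw [hw₂, hξc, hQc, hsq α,
      show (2 - 2 * α + ε) / 2 = α / 2 - (3 * α - 2 - ε) / 2 by ring, Real.rpow_sub hP0]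
    ring
  have hw₃eq : w₃ = 2 * γ * (h₁₂ * h₂₁) * P ^ ((1 - α + ε) / 2) := by
    rw [hw₃, hξc, hQc, hsq (2 * α - 1),
      show (1 - α + ε) / 2 = (2 * α - 1) / 2 - (3 * α - 2 - ε) / 2 by ring, Real.rpow_sub hP0]
    ring
  have hw₄eq : w₄ = γ * (h₁₁ * h₂₂) * P ^ (ε / 2) := by
    rw [hw₄, hξp, hQp, hsq (1 - α),
      show ε / 2 = (1 - α) / 2 - (1 - α - ε) / 2 by ring, Real.rpow_sub hP0]
    ring
  -- product bounds
  have hm2 : w₂ * (2 * Qc) ≤ 16 * γ * P ^ (α / 2) := by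
    have hexp : w₂ * (2 * Qc) = P ^ (α / 2) * (h₁₂ * h₁₁) * (2 * (ξc * Qc)) := by
      rw [hw₂, hsq α]; ring
    rw [hexp, hξcQc]
    calc P ^ (α / 2) * (h₁₂ * h₁₁) * (2 * (2 * γ))
        = (h₁₂ * h₁₁) * (4 * γ * P ^ (α / 2)) := by ring
      _ ≤ 4 * (4 * γ * P ^ (α / 2)) := mul_le_mul_of_nonneg_right hB4
          (mul_nonneg (mul_nonneg (by norm_num) hγ₁.le) (hpos _).le)
      _ = 16 * γ * P ^ (α / 2) := by ring
  have hm3 : w₃ * Qc ≤ 8 * γ * P ^ ((2 * α - 1) / 2) := by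
    have hexp : w₃ * Qc = P ^ ((2 * α - 1) / 2) * (h₁₂ * h₂₁) * (ξc * Qc) := by
      rw [hw₃, hsq (2 * α - 1)]; ring
    rw [hexp, hξcQc]
    calc P ^ ((2 * α - 1) / 2) * (h₁₂ * h₂₁) * (2 * γ)
        = (h₁₂ * h₂₁) * (2 * γ * P ^ ((2 * α - 1) / 2)) := by ring
      _ ≤ 4 * (2 * γ * P ^ ((2 * α - 1) / 2)) := mul_le_mul_of_nonneg_right hC4
          (mul_nonneg (mul_nonneg (by norm_num) hγ₁.le) (hpos _).le)
      _ = 8 * γ * P ^ ((2 * α - 1) / 2) := by ring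
  have hm4 : w₄ * Qp ≤ 4 * γ * P ^ ((1 - α) / 2) := by
    have hexp : w₄ * Qp = P ^ ((1 - α) / 2) * (h₁₁ * h₂₂) * (ξp * Qp) := by
      rw [hw₄, hsq (1 - α)]; ring
    rw [hexp, hξpQp]
    calc P ^ ((1 - α) / 2) * (h₁₁ * h₂₂) * γ
        = (h₁₁ * h₂₂) * (γ * P ^ ((1 - α) / 2)) := by ring
      _ ≤ 4 * (γ * P ^ ((1 - α) / 2)) := mul_le_mul_of_nonneg_right hA4
          (mul_nonneg hγ₁.le (hpos _).le)
      _ = 4 * γ * P ^ ((1 - α) / 2) := by ring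
  -- lifted versions
  have hlift : ∀ c x y : ℝ, 0 ≤ c → x ≤ y → c * P ^ x ≤ c * P ^ y := fun c x y hc hxy =>
    mul_le_mul_of_nonneg_left (hmono x y hxy) hc
  have hm3a : w₃ * Qc ≤ 8 * γ * P ^ (α / 2) := by
    have h := hlift (8 * γ) ((2 * α - 1) / 2) (α / 2) (by linarith) (by linarith)
    calc w₃ * Qc ≤ 8 * γ * P ^ ((2 * α - 1) / 2) := hm3
      _ ≤ 8 * γ * P ^ (α / 2) := by linarith [h]
  have hm4b : w₄ * Qp ≤ 4 * γ * P ^ ((2 * α - 1) / 2) := by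
    have h := hlift (4 * γ) ((1 - α) / 2) ((2 * α - 1) / 2) (by linarith) (by linarith)
    calc w₄ * Qp ≤ 4 * γ * P ^ ((1 - α) / 2) := hm4
      _ ≤ 4 * γ * P ^ ((2 * α - 1) / 2) := by linarith [h]
  have hm4a : w₄ * Qp ≤ 4 * γ * P ^ (α / 2) := by
    have h := hlift (4 * γ) ((2 * α - 1) / 2) (α / 2) (by linarith) (by linarith)
    linarith [hm4b]
  have hcgen : ∀ x : ℝ, 0 ≤ x → 4 * γ ≤ 4 * γ * P ^ x := by
    intro x hx
    have h := mul_le_mul_of_nonneg_left (hone x hx) (by linarith : (0:ℝ) ≤ 4 * γ)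
    linarith [h]
  have hc1 : 4 * γ ≤ 4 * γ * P ^ (α / 2) := hcgen _ (by linarith)
  have hc2 : 4 * γ ≤ 4 * γ * P ^ ((2 * α - 1) / 2) := hcgen _ (by linarith)
  have hc3 : 4 * γ ≤ 4 * γ * P ^ ((1 - α) / 2) := hcgen _ (by linarith)
  -- stage bounds
  have sb1 : 32 * γ * P ^ (α / 2) + T < γ * P ^ ((α + ε) / 2) :=
    stage_bound P γ T ε (α / 2) ((α + ε) / 2) hPe hγ₁ hT0 (by linarith) (by linarith) hkey
  have sb2 : 32 * γ * P ^ ((2 * α - 1) / 2) + T < γ * P ^ ((2 * α - 1 + ε) / 2) :=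
    stage_bound P γ T ε ((2 * α - 1) / 2) ((2 * α - 1 + ε) / 2) hPe hγ₁ hT0 (by linarith)
      (by linarith) hkey
  have sb3 : 32 * γ * P ^ ((1 - α) / 2) + T < γ * P ^ ((1 - α + ε) / 2) :=
    stage_bound P γ T ε ((1 - α) / 2) ((1 - α + ε) / 2) hPe hγ₁ hT0 (by linarith)
      (by linarith) hkey
  -- half-spacing dominations
  have hsgen : ∀ g x y : ℝ, 1 ≤ g → x ≤ y → γ * P ^ x ≤ 2 * γ * g * P ^ y / 2 := by
    intro g x y hg hxy
    have k1 : γ * P ^ x ≤ γ * P ^ y := hlift γ x y hγ₁.le hxy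
    have k2 : 1 * (γ * P ^ y) ≤ g * (γ * P ^ y) :=
      mul_le_mul_of_nonneg_right hg (mul_nonneg hγ₁.le (hpos _).le)
    calc γ * P ^ x ≤ γ * P ^ y := k1
      _ = 1 * (γ * P ^ y) := by ring
      _ ≤ g * (γ * P ^ y) := k2
      _ = 2 * γ * g * P ^ y / 2 := by ring
  have hs1 : γ * P ^ ((α + ε) / 2) ≤ w₁ / 2 := by
    rw [hw₁eq]; exact hsgen _ _ _ hA1 (by linarith)
  have hs2 : γ * P ^ ((2 * α - 1 + ε) / 2) ≤ w₂ / 2 := by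
    rw [hw₂eq]; exact hsgen _ _ _ hB1 (by linarith)
  have hs3 : γ * P ^ ((1 - α + ε) / 2) ≤ w₃ / 2 := by
    rw [hw₃eq]; exact hsgen _ _ _ hC1 (by linarith)
  have hs4 : γ / 2 * P ^ (ε / 2) ≤ w₄ / 2 := by
    rw [hw₄eq]
    have k2 : 1 * (γ / 2 * P ^ (ε / 2)) ≤ (h₁₁ * h₂₂) * (γ / 2 * P ^ (ε / 2)) :=
      mul_le_mul_of_nonneg_right hA1 (mul_nonneg (by linarith) (hpos _).le)
    calc γ / 2 * P ^ (ε / 2) = 1 * (γ / 2 * P ^ (ε / 2)) := by ring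
      _ ≤ (h₁₁ * h₂₂) * (γ / 2 * P ^ (ε / 2)) := k2
      _ = γ * (h₁₁ * h₂₂) * P ^ (ε / 2) / 2 := by ring
  -- triangle helpers
  have tri4 : ∀ x y z u : ℝ, |x + y + z + u| ≤ |x| + |y| + |z| + |u| := by
    intro x y z u
    calc |x + y + z + u| ≤ |x + y + z| + |u| := abs_add_le _ _
      _ ≤ (|x + y| + |z|) + |u| := by linarith [abs_add_le (x + y) z]
      _ ≤ ((|x| + |y|) + |z|) + |u| := by linarith [abs_add_le x y]
      _ = |x| + |y| + |z| + |u| := by ring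
  have tri3 : ∀ x y z : ℝ, |x + y + z| ≤ |x| + |y| + |z| := by
    intro x y z
    calc |x + y + z| ≤ |x + y| + |z| := abs_add_le _ _
      _ ≤ (|x| + |y|) + |z| := by linarith [abs_add_le x y]
  -- the decoder
  refine ⟨fun y => (ξc * ((round (y / w₁) : ℤ) : ℝ),
      ξp * ((round (sdStep w₃ (sdStep w₂ (sdStep w₁ y)) / w₄) : ℤ) : ℝ)), ?_, ?_⟩
  · exact ((measurable_roundcast w₁).const_mul ξc).prodMk
      (((measurable_roundcast w₄).comp
        ((measurable_sdStep w₃).comp ((measurable_sdStep w₂).comp (measurable_sdStep w₁)))).const_mul ξp)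
  -- probability estimate
  set Sc : Set ℝ := PAM ξc Qc with hSc
  set Sp : Set ℝ := PAM ξp Qp with hSp
  have hScfin : Sc.Finite := PAM_finite _ _
  have hSpfin : Sp.Finite := PAM_finite _ _
  have hScm : MeasurableSet Sc := hScfin.measurableSet
  have hSpm : MeasurableSet Sp := hSpfin.measurableSet
  haveI := uniformOn_isProbabilityMeasure hScfin (PAM_nonempty hQc0.le)
  haveI := uniformOn_isProbabilityMeasure hSpfin (PAM_nonempty hQp0.le)
  have hScc : uniformOn Sc Scᶜ = 0 := by
    rw [prob_compl_eq_one_sub hScm, uniformOn_self hScfin (PAM_nonempty hQc0.le)]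
    simp
  have hSpc : uniformOn Sp Spᶜ = 0 := by
    rw [prob_compl_eq_one_sub hSpm, uniformOn_self hSpfin (PAM_nonempty hQp0.le)]
    simp
  have e1 : μ (v₁c ⁻¹' Scᶜ) = 0 := by
    rw [← Measure.map_apply m1 hScm.compl, d1]; exact hScc
  have e2 : μ (v₂c ⁻¹' Scᶜ) = 0 := by
    rw [← Measure.map_apply m2 hScm.compl, d2]; exact hScc
  have e3 : μ (u₁ ⁻¹' Scᶜ) = 0 := by
    rw [← Measure.map_apply m3 hScm.compl, d3]; exact hScc
  have e4 : μ (u₂ ⁻¹' Scᶜ) = 0 := by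
    rw [← Measure.map_apply m4 hScm.compl, d4]; exact hScc
  have e5 : μ (v₁p ⁻¹' Spᶜ) = 0 := by
    rw [← Measure.map_apply m5 hSpm.compl, d5]; exact hSpc
  have e6 : μ (v₂p ⁻¹' Spᶜ) = 0 := by
    rw [← Measure.map_apply m6 hSpm.compl, d6]; exact hSpc
  set H : Set Ω := (v₁c ⁻¹' Sc) ∩ (v₂c ⁻¹' Sc) ∩ (u₁ ⁻¹' Sc) ∩ (u₂ ⁻¹' Sc) ∩
      (v₁p ⁻¹' Sp) ∩ (v₂p ⁻¹' Sp) with hH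
  have hHnull : μ Hᶜ = 0 := by
    have hsub : Hᶜ ⊆ (v₁c ⁻¹' Scᶜ) ∪ (v₂c ⁻¹' Scᶜ) ∪ (u₁ ⁻¹' Scᶜ) ∪ (u₂ ⁻¹' Scᶜ) ∪
        (v₁p ⁻¹' Spᶜ) ∪ (v₂p ⁻¹' Spᶜ) := by
      intro ω hω
      simp only [hH, Set.mem_compl_iff, Set.mem_inter_iff, Set.mem_preimage] at hω
      simp only [Set.mem_union, Set.mem_preimage, Set.mem_compl_iff]
      tauto
    exact measure_mono_null hsub
      (measure_union_null (measure_union_null (measure_union_null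
        (measure_union_null (measure_union_null e1 e2) e3) e4) e5) e6)
  set Z : Set Ω := z₁ ⁻¹' {x : ℝ | |x| ≤ T} with hZ
  have hZm : MeasurableSet Z :=
    m7 (isClosed_le continuous_abs continuous_const).measurableSet
  have hZc : μ Zᶜ < ENNReal.ofReal (min η 1 / 2) := by
    have hceq : Zᶜ = z₁ ⁻¹' {x : ℝ | T < |x|} := by
      rw [hZ]
      ext ω
      simp [not_le]
    rw [hceq, ← Measure.map_apply m7
      (isOpen_lt continuous_const continuous_abs).measurableSet, d7]
    exact hTtail
  -- the good event is contained in the decoding event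
  have hsub : Z ∩ H ⊆ {ω | (fun y => (ξc * ((round (y / w₁) : ℤ) : ℝ),
      ξp * ((round (sdStep w₃ (sdStep w₂ (sdStep w₁ y)) / w₄) : ℤ) : ℝ)))
        (Real.sqrt P * (h₁₁ * h₂₂) * v₁c ω
          + Real.sqrt (P ^ (1 - α)) * (h₁₁ * h₂₂) * v₁p ω
          + Real.sqrt (P ^ α) * (h₁₂ * h₁₁) * (v₂c ω + u₁ ω)
          + Real.sqrt (P ^ (2 * α - 1)) * (h₁₂ * h₂₁) * u₂ ω
          + (h₁₂ * h₁₁) * v₂p ω + z₁ ω)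
        = (v₁c ω, v₁p ω)} := by
    rintro ω ⟨hωZ, ⟨⟨⟨⟨⟨hω1, hω2⟩, hω3⟩, hω4⟩, hω5⟩, hω6⟩⟩
    obtain ⟨a, hva, haQ⟩ := PAM_mem_iff.1 hω1
    obtain ⟨a₂, hva₂, haQ₂⟩ := PAM_mem_iff.1 hω2
    obtain ⟨a₃, hva₃, haQ₃⟩ := PAM_mem_iff.1 hω3
    obtain ⟨t, hvt, htQ⟩ := PAM_mem_iff.1 hω4
    obtain ⟨b, hvb, hbQ⟩ := PAM_mem_iff.1 hω5
    obtain ⟨c, hvc, hcQ⟩ := PAM_mem_iff.1 hω6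
    have hzT : |z₁ ω| ≤ T := hωZ
    set e : ℝ := (h₁₂ * h₁₁) * v₂p ω + z₁ ω with he
    have heb : |e| ≤ 4 * γ + T := by
      have h1 : |(h₁₂ * h₁₁) * v₂p ω| ≤ 4 * γ := by
        have hv : |v₂p ω| ≤ γ := by
          rw [hvc, abs_mul, abs_of_pos hξp0]
          have k := mul_le_mul_of_nonneg_left hcQ hξp0.le
          linarith [hξpQp]
        rw [abs_mul, abs_of_pos hB0]
        exact (mul_le_mul hB4 hv (abs_nonneg _) (by norm_num)).trans_eq (by ring)
      calc |e| ≤ |(h₁₂ * h₁₁) * v₂p ω| + |z₁ ω| := abs_add_le _ _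
        _ ≤ 4 * γ + T := add_le_add h1 hzT
    have hsabs : |((a₂ + a₃ : ℤ) : ℝ)| ≤ 2 * Qc := by
      push_cast
      calc |(a₂:ℝ) + (a₃:ℝ)| ≤ |(a₂:ℝ)| + |(a₃:ℝ)| := abs_add_le _ _
        _ ≤ 2 * Qc := by linarith
    have habs2 : |w₂ * ((a₂ + a₃ : ℤ) : ℝ)| ≤ w₂ * (2 * Qc) := by
      rw [abs_mul, abs_of_pos hw₂0]
      exact mul_le_mul_of_nonneg_left hsabs hw₂0.le
    have habs3 : |w₃ * (t : ℝ)| ≤ w₃ * Qc := by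
      rw [abs_mul, abs_of_pos hw₃0]
      exact mul_le_mul_of_nonneg_left htQ hw₃0.le
    have habs4 : |w₄ * (b : ℝ)| ≤ w₄ * Qp := by
      rw [abs_mul, abs_of_pos hw₄0]
      exact mul_le_mul_of_nonneg_left hbQ hw₄0.le
    -- stage inequalities
    have st1 : |w₂ * ((a₂ + a₃ : ℤ) : ℝ) + w₃ * (t : ℝ) + w₄ * (b : ℝ) + e| < w₁ / 2 := by
      have := tri4 (w₂ * ((a₂ + a₃ : ℤ) : ℝ)) (w₃ * (t : ℝ)) (w₄ * (b : ℝ)) e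
      linarith
    have st2 : |w₃ * (t : ℝ) + w₄ * (b : ℝ) + e| < w₂ / 2 := by
      have := tri3 (w₃ * (t : ℝ)) (w₄ * (b : ℝ)) e
      linarith
    have st3 : |w₄ * (b : ℝ) + e| < w₃ / 2 := by
      have := abs_add_le (w₄ * (b : ℝ)) e
      linarith
    have st4 : |e| < w₄ / 2 := by linarith
    obtain ⟨r1, r2⟩ := decode4 w₁ w₂ w₃ w₄ e a (a₂ + a₃) t b hw₁0 hw₂0 hw₃0 hw₄0 st1 st2 st3 st4
    have hy : Real.sqrt P * (h₁₁ * h₂₂) * v₁c ω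
          + Real.sqrt (P ^ (1 - α)) * (h₁₁ * h₂₂) * v₁p ω
          + Real.sqrt (P ^ α) * (h₁₂ * h₁₁) * (v₂c ω + u₁ ω)
          + Real.sqrt (P ^ (2 * α - 1)) * (h₁₂ * h₂₁) * u₂ ω
          + (h₁₂ * h₁₁) * v₂p ω + z₁ ω
        = w₁ * (a : ℝ) + w₂ * ((a₂ + a₃ : ℤ) : ℝ) + w₃ * (t : ℝ) + w₄ * (b : ℝ) + e := by
      rw [he, hva, hva₂, hva₃, hvt, hvb, hw₁, hw₂, hw₃, hw₄]
      push_cast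
      ring
    simp only [Set.mem_setOf_eq]
    rw [hy]
    simp only [Prod.mk.injEq]
    constructor
    · rw [r1, ← hva]
    · rw [r2, ← hvb]
  -- conclude
  have hmain : μ (Z ∩ H) = μ Z := measure_inter_conull hHnull
  have hcompl := measure_add_measure_compl (μ := μ) hZm
  rw [measure_univ] at hcompl
  have hlt : ENNReal.ofReal (1 - η) + μ Zᶜ < 1 := by
    calc ENNReal.ofReal (1 - η) + μ Zᶜ
        < ENNReal.ofReal (1 - η) + ENNReal.ofReal (min η 1 / 2) :=
          ENNReal.add_lt_add_left ENNReal.ofReal_ne_top hZc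
      _ ≤ ENNReal.ofReal (1 - min η 1 / 2) + ENNReal.ofReal (min η 1 / 2) := by
          gcongr
          have : min η 1 ≤ η := min_le_left _ _
          linarith
      _ = ENNReal.ofReal 1 := by
          rw [← ENNReal.ofReal_add (by
            have : min η 1 ≤ 1 := min_le_right _ _
            linarith) (by
            have : 0 < min η 1 := lt_min hη one_pos
            linarith)]
          norm_num
      _ = 1 := ENNReal.ofReal_one
  have hZlt : ENNReal.ofReal (1 - η) < μ Z := by
    rw [← hcompl] at hlt
    exact (ENNReal.add_lt_add_iff_right (measure_ne_top μ Zᶜ)).1 hlt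
  calc ENNReal.ofReal (1 - η) < μ Z := hZlt
    _ = μ (Z ∩ H) := hmain.symm
    _ ≤ _ := measure_mono hsub
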